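/- Let R be a ring and C a class of chain complexes of right R-modules. The class ₍C₎W of all C-acyclic complexes is closed under transfinite extensions in Ch(R)_pur: if X ≅ colim_{α<λ} X_α where each X_α → X_{α+1} is a degreewise pure monomorphism and each X_α and each quotient X_{α+1}/X_α is C-acyclic, then X is C-acyclic. -/

import Mathlib

open CategoryTheory Limits

noncomputable section


namespace KFlatPaper

variable (R : Type) [Ring R]

/-- Cochain complexes of left `R`-modules (indexed by `ℤ`). -/
abbrev Cx := CochainComplex (ModuleCat.{0} R) ℤ

/-- Cochain complexes of right `R`-modules. -/
abbrev CxOp := CochainComplex (ModuleCat.{0} Rᵐᵒᵖ) ℤ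

section Tensor

variable (M : Type) [AddCommGroup M] [Module Rᵐᵒᵖ M]
variable (N : Type) [AddCommGroup N] [Module R N]

/-- The subgroup of `M ⊗[ℤ] N` generated by the balancing relations `(m·r) ⊗ n - m ⊗ (r·n)`. -/
def mtRel : AddSubgroup (TensorProduct ℤ M N) :=
  AddSubgroup.closure {z | ∃ (r : R) (m : M) (n : N),
    z = (MulOpposite.op r • m) ⊗ₜ[ℤ] n - m ⊗ₜ[ℤ] (r • n)}

/-- The tensor product `M ⊗_R N` of a right `R`-module and a left `R`-module
(as an abelian group). -/
def mt := TensorProduct ℤ M N ⧸ mtRel R M N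

instance : AddCommGroup (mt R M N) := QuotientAddGroup.Quotient.addCommGroup _

variable {R M N}
variable {M' : Type} [AddCommGroup M'] [Module Rᵐᵒᵖ M']
variable {N' : Type} [AddCommGroup N'] [Module R N']

/-- Functoriality of `mt` in both variables. -/
def mtMap (f : M →ₗ[Rᵐᵒᵖ] M') (g : N →ₗ[R] N') : mt R M N →+ mt R M' N' :=
  QuotientAddGroup.map _ _
    (TensorProduct.map (f.toAddMonoidHom.toIntLinearMap) (g.toAddMonoidHom.toIntLinearMap)).toAddMonoidHom
    (by
      rw [mtRel, AddSubgroup.closure_le]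
      rintro z ⟨r, m, n, rfl⟩
      simp only [SetLike.mem_coe, AddSubgroup.mem_comap, LinearMap.toAddMonoidHom_coe,
        map_sub, TensorProduct.map_tmul, AddMonoidHom.coe_toIntLinearMap,
        LinearMap.toAddMonoidHom_coe]
      rw [f.map_smul, g.map_smul]
      exact AddSubgroup.subset_closure ⟨r, f m, g n, rfl⟩)

end Tensor


section TensorComplex

variable {R}

/-- Degree `n` part of the tensor product complex `C ⊗_R W`. -/
abbrev tobj (C : CxOp R) (W : Cx R) (n : ℤ) : Type :=
  DirectSum ℤ (fun i => mt R (C.X i) (W.X (n - i)))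

/-- The differential of the tensor product complex `C ⊗_R W`,
given on `x ⊗ y` by `dx ⊗ y + (-1)^{|x|} x ⊗ dy`. -/
def td (C : CxOp R) (W : Cx R) (n : ℤ) : tobj C W n →+ tobj C W (n + 1) :=
  DirectSum.toAddMonoid fun i =>
    (DirectSum.of (fun j => mt R (C.X j) (W.X (n + 1 - j))) (i + 1)).comp
      (mtMap (C.d i (i + 1)).hom ((W.XIsoOfEq (show n - i = n + 1 - (i + 1) by ring)).hom.hom))
    + (((-1 : ℤˣ) ^ i : ℤˣ) : ℤ) •
      (DirectSum.of (fun j => mt R (C.X j) (W.X (n + 1 - j))) i).comp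
        (mtMap LinearMap.id
          (((W.XIsoOfEq (show n - i + 1 = n + 1 - i by ring)).hom.hom : W.X (n-i+1) →ₗ[R] W.X (n+1-i)) ∘ₗ
            ((W.d (n - i) (n - i + 1)).hom : W.X (n-i) →ₗ[R] W.X (n-i+1))))

/-- Cast between degreewise parts of the tensor complex. -/
def tcast (C : CxOp R) (W : Cx R) {m n : ℤ} (h : m = n) : tobj C W m →+ tobj C W n := by
  subst h; exact AddMonoidHom.id _

/-- `C ⊗_R W` is acyclic (exact). -/
def TAcyclic (C : CxOp R) (W : Cx R) : Prop :=
  ∀ n : ℤ, Function.Exact (td C W n) (td C W (n + 1))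

/-- Functoriality of the tensor complex in the second variable. -/
def tmapR (C : CxOp R) {W W' : Cx R} (φ : W ⟶ W') (n : ℤ) : tobj C W n →+ tobj C W' n :=
  DirectSum.toAddMonoid fun i =>
    (DirectSum.of (fun j => mt R (C.X j) (W'.X (n - j))) i).comp
      (mtMap LinearMap.id (φ.f (n - i)).hom)

/-- The boundaries subgroup `B_n(C ⊗_R W)`. -/
def tB (C : CxOp R) (W : Cx R) (n : ℤ) : AddSubgroup (tobj C W n) :=
  AddMonoidHom.range ((tcast C W (show n - 1 + 1 = n by ring)).comp (td C W (n - 1)))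

/-- The cycles subgroup `Z_n(C ⊗_R W)`. -/
def tZ (C : CxOp R) (W : Cx R) (n : ℤ) : AddSubgroup (tobj C W n) :=
  AddMonoidHom.ker (td C W n)

end TensorComplex


section ModuleTensor

variable {R}
variable (M : Type) [AddCommGroup M] [Module Rᵐᵒᵖ M]

/-- The differential of the complex `M ⊗_R W`, for a right `R`-module `M`. -/
def mtd (W : Cx R) (n m : ℤ) : mt R M (W.X n) →+ mt R M (W.X m) :=
  mtMap LinearMap.id (W.d n m).hom

/-- `M ⊗_R W` is acyclic, for a right `R`-module `M`. -/
def MTAcyclic (W : Cx R) : Prop :=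
  ∀ n : ℤ, Function.Exact (mtd M W (n - 1) n) (mtd M W n (n + 1))

end ModuleTensor

section Classes

variable {R}

/-- `W` is `𝒞`-acyclic : `C ⊗_R W` is acyclic for every `C ∈ 𝒞`. -/
def CAcyclic (𝒞 : Set (CxOp R)) (W : Cx R) : Prop := ∀ C ∈ 𝒞, TAcyclic C W

/-- A complex is acyclic (exact) if it is exact in every degree. -/
def Acyclic {S : Type} [Ring S] (X : CochainComplex (ModuleCat.{0} S) ℤ) : Prop :=
  ∀ n : ℤ, X.ExactAt n

/-- `W` is K-flat : `E ⊗_R W` is acyclic for every acyclic complex `E`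
of right `R`-modules. -/
def KFlat (W : Cx R) : Prop := ∀ E : CxOp R, Acyclic E → TAcyclic E W

/-- `W` is pure acyclic : `M ⊗_R W` is acyclic for every right `R`-module `M`. -/
def PureAcyclic (W : Cx R) : Prop :=
  ∀ (M : Type) [AddCommGroup M] [Module Rᵐᵒᵖ M], MTAcyclic M W

end Classes

section Purity

variable {R}
variable {A B C : Type} [AddCommGroup A] [Module R A] [AddCommGroup B] [Module R B]
  [AddCommGroup C] [Module R C]

/-- `0 → A → B → C → 0` is a pure exact sequence of left `R`-modules:
it is a short exact sequence which stays short exact after applying `M ⊗_R -`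
for every right `R`-module `M`. -/
def PureSESMod (f : A →ₗ[R] B) (g : B →ₗ[R] C) : Prop :=
  (Function.Injective f ∧ Function.Exact f g ∧ Function.Surjective g) ∧
  ∀ (M : Type) [AddCommGroup M] [Module Rᵐᵒᵖ M],
    Function.Injective (mtMap (LinearMap.id (M := M)) f) ∧
    Function.Exact (mtMap (LinearMap.id (M := M)) f) (mtMap (LinearMap.id (M := M)) g) ∧
    Function.Surjective (mtMap (LinearMap.id (M := M)) g)

/-- `f` is a pure monomorphism of left `R`-modules. -/
def PureMonoMod (f : A →ₗ[R] B) : Prop :=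
  Function.Injective f ∧
  ∀ (M : Type) [AddCommGroup M] [Module Rᵐᵒᵖ M],
    Function.Injective (mtMap (LinearMap.id (M := M)) f)

/-- A pure-injective left `R`-module: one which is injective relative to
pure exact sequences (equivalently, to pure monomorphisms) of modules. -/
def PureInjMod (I : Type) [AddCommGroup I] [Module R I] : Prop :=
  ∀ (A' B' : Type) [AddCommGroup A'] [Module R A'] [AddCommGroup B'] [Module R B']
    (f : A' →ₗ[R] B'), PureMonoMod f →
      ∀ u : A' →ₗ[R] I, ∃ v : B' →ₗ[R] I, v ∘ₗ f = u

/-- A short exact sequence of complexes which is pure exact in each degree: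
an admissible short exact sequence of `Ch(R)_pur`. -/
def DWPureSES {X Y Z : Cx R} (f : X ⟶ Y) (g : Y ⟶ Z) : Prop :=
  ∀ n : ℤ, PureSESMod (f.f n).hom (g.f n).hom

/-- A degreewise pure monomorphism of complexes (an admissible monomorphism
of `Ch(R)_pur`). -/
def DWPureMonoCx {X Y : Cx R} (f : X ⟶ Y) : Prop :=
  ∀ n : ℤ, PureMonoMod (f.f n).hom

end Purity

section Cotorsion

variable {R}

/-- `Ext¹_pur(X, Y) = 0` : every degreewise pure short exact sequence
`0 → Y → Z → X → 0` splits. -/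
def ExtPur1Zero (X Y : Cx R) : Prop :=
  ∀ (Z : Cx R) (i : Y ⟶ Z) (p : Z ⟶ X), DWPureSES i p → ∃ r : Z ⟶ Y, i ≫ r = 𝟙 Y

/-- The right `Ext¹_pur`-orthogonal of a class of complexes. -/
def rOrth (𝒜 : Set (Cx R)) : Set (Cx R) := {Y | ∀ X ∈ 𝒜, ExtPur1Zero X Y}

/-- The left `Ext¹_pur`-orthogonal of a class of complexes. -/
def lOrth (ℬ : Set (Cx R)) : Set (Cx R) := {X | ∀ Y ∈ ℬ, ExtPur1Zero X Y}

/-- A cotorsion pair in `Ch(R)_pur`. -/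
def CotorsionPair (𝒜 ℬ : Set (Cx R)) : Prop := 𝒜 = lOrth ℬ ∧ ℬ = rOrth 𝒜

/-- Completeness of a cotorsion pair `(𝒜, ℬ)` in `Ch(R)_pur` : every complex has
an approximation sequence on each side, by degreewise pure short exact sequences. -/
def CompletePair (𝒜 ℬ : Set (Cx R)) : Prop :=
  (∀ X : Cx R, ∃ (B A : Cx R) (i : B ⟶ A) (p : A ⟶ X),
      DWPureSES i p ∧ A ∈ 𝒜 ∧ B ∈ ℬ) ∧
  (∀ X : Cx R, ∃ (B A : Cx R) (i : X ⟶ B) (p : B ⟶ A),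
      DWPureSES i p ∧ B ∈ ℬ ∧ A ∈ 𝒜)

/-- The pair is hereditary: the left class is closed under kernels of admissible
epimorphisms between its members. -/
def HereditaryLeft (𝒜 : Set (Cx R)) : Prop :=
  ∀ (K A₁ A₂ : Cx R) (i : K ⟶ A₁) (p : A₁ ⟶ A₂),
    DWPureSES i p → A₁ ∈ 𝒜 → A₂ ∈ 𝒜 → K ∈ 𝒜

/-- Two-out-of-three for a class, relative to the degreewise pure exact structure. -/
def TwoOutOfThree (𝒲 : Set (Cx R)) : Prop :=
  ∀ (X Y Z : Cx R) (f : X ⟶ Y) (g : Y ⟶ Z), DWPureSES f g →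
    ((X ∈ 𝒲 → Y ∈ 𝒲 → Z ∈ 𝒲) ∧ (X ∈ 𝒲 → Z ∈ 𝒲 → Y ∈ 𝒲) ∧ (Y ∈ 𝒲 → Z ∈ 𝒲 → X ∈ 𝒲))

/-- `X` is a retract (direct summand) of `Y`. -/
def IsRetractOf (X Y : Cx R) : Prop := ∃ (s : X ⟶ Y) (r : Y ⟶ X), s ≫ r = 𝟙 X

/-- A thick class: closed under retracts and satisfying two-out-of-three for
degreewise pure short exact sequences. -/
def ThickClass (𝒲 : Set (Cx R)) : Prop :=
  (∀ X Y : Cx R, IsRetractOf X Y → Y ∈ 𝒲 → X ∈ 𝒲) ∧ TwoOutOfThree 𝒲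

/-- An injective object of the exact category `Ch(R)_pur`. -/
def PurInjObjCx (I : Cx R) : Prop :=
  ∀ (X Y : Cx R) (f : X ⟶ Y), DWPureMonoCx f → ∀ u : X ⟶ I, ∃ v : Y ⟶ I, f ≫ v = u

/-- An injective cotorsion pair `(𝒲, ℱ)` in `Ch(R)_pur`: a complete cotorsion pair
with thick left class whose core `𝒲 ∩ ℱ` is the class of injective objects of
`Ch(R)_pur`. -/
def InjectiveCP (𝒲 ℱ : Set (Cx R)) : Prop :=
  CotorsionPair 𝒲 ℱ ∧ CompletePair 𝒲 ℱ ∧ ThickClass 𝒲 ∧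
    (𝒲 ∩ ℱ = {I : Cx R | PurInjObjCx I})

/-- A Hovey triple `(𝒬, 𝒲, ℱ)` for the exact category `Ch(R)_pur`: the data of an
abelian (exact) model structure on `Ch(R)_pur` with cofibrant objects `𝒬`, trivial
objects `𝒲`, and fibrant objects `ℱ`. -/
def HoveyTriple (𝒬 𝒲 ℱ : Set (Cx R)) : Prop :=
  ThickClass 𝒲 ∧
    (CotorsionPair (𝒬 ∩ 𝒲) ℱ ∧ CompletePair (𝒬 ∩ 𝒲) ℱ) ∧
    (CotorsionPair 𝒬 (𝒲 ∩ ℱ) ∧ CompletePair 𝒬 (𝒲 ∩ ℱ))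

/-- A cotorsion pair is cogenerated by a set `S` when its right class is `S^⊥`;
`S` is required to be small (a set, not a proper class). -/
def CogenBySet (ℬ : Set (Cx R)) : Prop :=
  ∃ S : Set (Cx R), Small.{0} S ∧ ℬ = rOrth S

/-- The abelian model structure given by a Hovey triple is cofibrantly generated:
both of its associated complete cotorsion pairs are cogenerated by sets. -/
def CofibrantlyGenerated (𝒬 𝒲 ℱ : Set (Cx R)) : Prop :=
  CogenBySet ℱ ∧ CogenBySet (𝒲 ∩ ℱ)

/-- The weak equivalences of the abelian model structure determined by the
Hovey triple `(𝒬, 𝒲, ℱ)` : morphisms factoring as an admissible monomorphism with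
trivially cofibrant cokernel followed by an admissible epimorphism with trivially
fibrant kernel. -/
def WeakEq (𝒬 𝒲 ℱ : Set (Cx R)) : MorphismProperty (Cx R) := fun X Y f =>
  ∃ (Z : Cx R) (i : X ⟶ Z) (p : Z ⟶ Y), f = i ≫ p ∧
    (∃ (T : Cx R) (q : Z ⟶ T), DWPureSES i q ∧ T ∈ 𝒬 ∩ 𝒲) ∧
    (∃ (K : Cx R) (k : K ⟶ Z), DWPureSES k p ∧ K ∈ 𝒲 ∩ ℱ)

/-- The homotopy category of the abelian model structure determined by a Hovey
triple: the localization at its weak equivalences. -/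
def HoCat (𝒬 𝒲 ℱ : Set (Cx R)) := (WeakEq 𝒬 𝒲 ℱ).Localization

instance (𝒬 𝒲 ℱ : Set (Cx R)) : Category (HoCat 𝒬 𝒲 ℱ) := by
  unfold HoCat; infer_instance

end Cotorsion

section HomotopyCat

variable {R}

/-- The chain homotopy category `K(R)`. -/
abbrev KR := HomotopyCategory (ModuleCat.{0} R) (ComplexShape.up ℤ)

/-- The full subcategory of `K(R)` of all complexes homotopy equivalent to
(i.e. isomorphic in `K(R)` to) a complex satisfying `P`. -/
def Ksub (P : Set (Cx R)) :=
  ObjectProperty.FullSubcategory (fun X : KR (R := R) =>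
    ∃ Y : Cx R, P Y ∧
      Nonempty ((((HomotopyCategory.quotient (ModuleCat.{0} R) (ComplexShape.up ℤ))).obj Y ≅ X)))

instance (P : Set (Cx R)) : Category (Ksub P) := by
  unfold Ksub; infer_instance

/-- A contractible complex. -/
def Contractible (X : Cx R) : Prop := Nonempty (Homotopy (𝟙 X) 0)

/-- The class of complexes of pure-injective modules. -/
def dwPI : Set (Cx R) := {X | ∀ n : ℤ, PureInjMod (R := R) (X.X n)}

/-- The class of acyclic (exact) complexes of pure-injective modules. -/
def exPI : Set (Cx R) := {X | Acyclic X ∧ ∀ n : ℤ, PureInjMod (R := R) (X.X n)}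

end HomotopyCat


section QuasiIso

variable {R}
variable (M : Type) [AddCommGroup M] [Module Rᵐᵒᵖ M]

/-- Boundaries of the complex `M ⊗_R W` in degree `n`. -/
def mtB (W : Cx R) (n : ℤ) : AddSubgroup (mt R M (W.X n)) :=
  AddMonoidHom.range (mtd M W (n - 1) n)

/-- Cycles of the complex `M ⊗_R W` in degree `n`. -/
def mtZ (W : Cx R) (n : ℤ) : AddSubgroup (mt R M (W.X n)) :=
  AddMonoidHom.ker (mtd M W n (n + 1))

/-- For a chain map `f : X → Y`, the map `M ⊗_R f` is a homology isomorphism: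
it induces a bijection on the homology of the complexes `M ⊗_R X` and `M ⊗_R Y`
in every degree. -/
def MTQuasiIso {X Y : Cx R} (f : X ⟶ Y) : Prop :=
  ∀ n : ℤ,
    (∀ x ∈ mtZ M X n, mtMap (LinearMap.id (M := M)) (f.f n).hom x ∈ mtB M Y n → x ∈ mtB M X n) ∧
    (∀ y ∈ mtZ M Y n, ∃ x ∈ mtZ M X n,
      mtMap (LinearMap.id (M := M)) (f.f n).hom x - y ∈ mtB M Y n)

/-- `f` is a pure homology isomorphism: `M ⊗_R f` is a homology isomorphism for
every right `R`-module `M`. -/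
def PureQuasiIso {X Y : Cx R} (f : X ⟶ Y) : Prop :=
  ∀ (M : Type) [AddCommGroup M] [Module Rᵐᵒᵖ M], MTQuasiIso M f

/-- For a chain map `f : X → Y` and a complex `C` of right modules, `C ⊗_R f`
is a homology isomorphism. -/
def TQuasiIso (C : CxOp R) {X Y : Cx R} (f : X ⟶ Y) : Prop :=
  ∀ n : ℤ,
    (∀ x ∈ tZ C X n, tmapR C f n x ∈ tB C Y n → x ∈ tB C X n) ∧
    (∀ y ∈ tZ C Y n, ∃ x ∈ tZ C X n, tmapR C f n x - y ∈ tB C Y n)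

/-- `f` is a K-flat quism: `E ⊗_R f` is a homology isomorphism for every
acyclic complex `E` of right `R`-modules. -/
def KFlatQuism {X Y : Cx R} (f : X ⟶ Y) : Prop :=
  ∀ E : CxOp R, Acyclic E → TQuasiIso E f

end QuasiIso


section Transfinite

variable {R}

/-- The restriction of a chain `F : J ⥤ Ch(R)` to the interval below `j`. -/
def iioDiagram {J : Type} [Preorder J] (F : J ⥤ Cx R) (j : J) : Set.Iio j ⥤ Cx R :=
  (Monotone.functor (f := fun i : Set.Iio j => (i : J)) (fun _ _ h => h)).comp F

/-- The canonical cocone on the restriction of `F` below `j`, with apex `F.obj j`. -/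
def iioCocone {J : Type} [Preorder J] (F : J ⥤ Cx R) (j : J) : Cocone (iioDiagram F j) where
  pt := F.obj j
  ι :=
    { app := fun i => F.map (homOfLE i.2.le)
      naturality := fun a b h => by
        dsimp [iioDiagram]
        rw [Category.comp_id, ← F.map_comp]
        congr 1 }

end Transfinite


section Pontryagin

variable {R}
variable (M : Type) [AddCommGroup M] [Module Rᵐᵒᵖ M]

/-- The Pontryagin dual (character module) `Hom_ℤ(M, ℚ/ℤ)` of a right `R`-module,
as a left `R`-module, where `R` acts by `(r • φ) m = φ (m • r)`. -/
def CharMod : Type := M →+ (AddCircle (1 : ℚ))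

instance : AddCommGroup (CharMod M) :=
  inferInstanceAs (AddCommGroup (M →+ AddCircle (1 : ℚ)))

instance : FunLike (CharMod M) M (AddCircle (1 : ℚ)) :=
  inferInstanceAs (FunLike (M →+ AddCircle (1 : ℚ)) M (AddCircle (1 : ℚ)))

instance : AddMonoidHomClass (CharMod M) M (AddCircle (1 : ℚ)) :=
  inferInstanceAs (AddMonoidHomClass (M →+ AddCircle (1 : ℚ)) M (AddCircle (1 : ℚ)))

variable {M}

theorem charExt {φ ψ : CharMod M} (h : ∀ m, φ m = ψ m) : φ = ψ :=
  AddMonoidHom.ext h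

variable (M)

instance : Module R (CharMod M) where
  smul r φ := (φ : M →+ _).comp (DistribMulAction.toAddMonoidHom M (MulOpposite.op r))
  one_smul φ := charExt fun m => by
    show φ ((MulOpposite.op (1 : R)) • m) = φ m
    simp
  mul_smul r s φ := charExt fun m => by
    show φ ((MulOpposite.op (r * s)) • m) = φ (MulOpposite.op s • MulOpposite.op r • m)
    rw [MulOpposite.op_mul, mul_smul]
  smul_zero r := rfl
  smul_add r φ ψ := rfl
  add_smul r s φ := charExt fun m => by
    show φ ((MulOpposite.op (r + s)) • m)
      = φ (MulOpposite.op r • m) + φ (MulOpposite.op s • m)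
    rw [MulOpposite.op_add, add_smul, map_add]
  zero_smul φ := charExt fun m => by
    show φ ((MulOpposite.op (0 : R)) • m) = 0
    simp

variable {M} {N : Type} [AddCommGroup N] [Module Rᵐᵒᵖ N]

/-- The Pontryagin dual of a map of right `R`-modules. -/
def charDual (ψ : M →ₗ[Rᵐᵒᵖ] N) : CharMod N →ₗ[R] CharMod M where
  toFun φ := (φ : N →+ _).comp ψ.toAddMonoidHom
  map_add' φ₁ φ₂ := rfl
  map_smul' r φ := charExt fun m => by
    show φ (MulOpposite.op r • ψ m) = φ (ψ (MulOpposite.op r • m))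
    rw [ψ.map_smul]

theorem charDual_zero : (charDual (0 : M →ₗ[Rᵐᵒᵖ] N)) = (0 : CharMod N →ₗ[R] CharMod M) :=
  LinearMap.ext fun φ => charExt fun _ => map_zero φ

/-- The Pontryagin dual complex `Hom_ℤ(C, ℚ/ℤ)` of a complex of right `R`-modules,
a complex of left `R`-modules. -/
def charCx (C : CxOp R) : Cx R :=
  CochainComplex.of (fun n => ModuleCat.of R (CharMod (C.X (-n))))
    (fun n => ModuleCat.ofHom (charDual (C.d (-(n+1)) (-n)).hom))
    (fun n => by
      have h : C.d (-(n+1+1)) (-(n+1)) ≫ C.d (-(n+1)) (-n) = 0 := C.d_comp_d _ _ _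
      have e : (ModuleCat.ofHom (charDual (C.d (-(n+1)) (-n)).hom) ≫
          ModuleCat.ofHom (charDual (C.d (-(n+1+1)) (-(n+1))).hom))
          = ModuleCat.ofHom (charDual (C.d (-(n+1+1)) (-(n+1)) ≫ C.d (-(n+1)) (-n)).hom) := rfl
      rw [e, h, ModuleCat.hom_zero, charDual_zero]
      rfl)

end Pontryagin

section Verdier

variable {R}

open Pretriangulated in
/-- The class of morphisms of `K(R)` whose cone is K-flat.  Inverting them gives the
Verdier quotient `K(R)/K-Flat`. -/
def WKFlatK : MorphismProperty (KR (R := R)) := fun X Y f =>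
  ∃ (Z : KR (R := R)) (g : Y ⟶ Z) (h : Z ⟶ X⟦(1 : ℤ)⟧),
    (Triangle.mk f g h ∈ distTriang (KR (R := R))) ∧ KFlat Z.as

open Pretriangulated in
/-- The class of morphisms of `K(R)` whose cone is pure acyclic.  Inverting them gives the
Verdier quotient of `K(R)` by the pure acyclic complexes, i.e. `D_pur(R)`. -/
def WPurK : MorphismProperty (KR (R := R)) := fun X Y f =>
  ∃ (Z : KR (R := R)) (g : Y ⟶ Z) (h : Z ⟶ X⟦(1 : ℤ)⟧),
    (Triangle.mk f g h ∈ distTriang (KR (R := R))) ∧ PureAcyclic Z.as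

open Pretriangulated in
/-- The class of morphisms of `K(R)` whose cone is acyclic.  Inverting them gives the
Verdier quotient of `K(R)` by the acyclic complexes, i.e. the derived category `D(R)`. -/
def WAcK : MorphismProperty (KR (R := R)) := fun X Y f =>
  ∃ (Z : KR (R := R)) (g : Y ⟶ Z) (h : Z ⟶ X⟦(1 : ℤ)⟧),
    (Triangle.mk f g h ∈ distTriang (KR (R := R))) ∧ Acyclic Z.as

variable (R)

/-- The K-flat derived category `D_{K-flat}(R) = K(R)/K-Flat`. -/
def DKFlat := (WKFlatK (R := R)).Localization

instance : Category (DKFlat R) := by unfold DKFlat; infer_instance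

/-- The pure derived category `D_pur(R)`, the Verdier quotient of `K(R)` by
the pure acyclic complexes. -/
def DPur := (WPurK (R := R)).Localization

instance : Category (DPur R) := by unfold DPur; infer_instance

/-- The derived category `D(R)`, the Verdier quotient of `K(R)` by
the acyclic complexes. -/
def DerCat := (WAcK (R := R)).Localization

instance : Category (DerCat R) := by unfold DerCat; infer_instance

/-- The derived category `D(R)` as the localization of `Ch(R)` at the
quasi-isomorphisms. -/
def DerCat' := (HomologicalComplex.quasiIso (ModuleCat.{0} R) (ComplexShape.up ℤ)).Localization

instance : Category (DerCat' R) := by unfold DerCat'; infer_instance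

/-- Pure homology isomorphisms as a morphism property on `Ch(R)`. -/
def pureQuasiIsoMP : MorphismProperty (Cx R) := fun _ _ f => PureQuasiIso f

/-- The pure derived category `D_pur(R)` as the localization of `Ch(R)` at the
pure homology isomorphisms. -/
def DPur' := (pureQuasiIsoMP R).Localization

instance : Category (DPur' R) := by unfold DPur'; infer_instance

end Verdier

section Recollement

universe v₁ u₁ v₂ u₂ v₃ u₃ w v

/-- A recollement of categories `T₁ → T₂ → T₃` : a fully faithful inclusion `i` with
left and right adjoints, and a quotient functor `q` with fully faithful left and right
adjoints, such that the essential image of `i` is the kernel of `q`. -/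
structure Recollement (T₁ : Type u₁) (T₂ : Type u₂) (T₃ : Type u₃)
    [Category.{v₁} T₁] [Category.{v₂} T₂] [Category.{v₃} T₃] where
  i : T₁ ⥤ T₂
  q : T₂ ⥤ T₃
  iL : T₂ ⥤ T₁
  iR : T₂ ⥤ T₁
  qL : T₃ ⥤ T₂
  qR : T₃ ⥤ T₂
  adj₁ : iL ⊣ i
  adj₂ : i ⊣ iR
  adj₃ : qL ⊣ q
  adj₄ : q ⊣ qR
  i_faithful : i.Faithful
  i_full : i.Full
  qL_faithful : qL.Faithful
  qL_full : qL.Full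
  qR_faithful : qR.Faithful
  qR_full : qR.Full
  ess : ∀ X : T₂, IsZero (q.obj X) ↔ ∃ Y : T₁, Nonempty (i.obj Y ≅ X)

variable (T : Type u₁) [Category.{v₁} T]

/-- An object `s` of a category with coproducts is compact when every morphism from `s`
to a coproduct factors through the coproduct of a finite subfamily. -/
def CompactObj {T : Type u₁} [Category.{v₁} T] (s : T) : Prop :=
  ∀ (J : Type) (g : J → T) (c : Cofan g), IsColimit c →
    ∀ f : s ⟶ c.pt, ∃ (t : Finset J) (c' : Cofan fun j : t => g j) (hc' : IsColimit c')
      (f' : s ⟶ c'.pt), f = f' ≫ hc'.desc (Cofan.mk c.pt fun j => c.inj j)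

/-- A category with coproducts is compactly generated when there is a set of compact
objects detecting the zero objects. -/
def CompactlyGenerated (T : Type u₁) [Category.{v₁} T] : Prop :=
  HasCoproducts.{0} T ∧
    ∃ S : Set T, Small.{0} S ∧ (∀ s ∈ S, CompactObj s) ∧
      ∀ X : T, (∀ s ∈ S, ∀ f g : (s : T) ⟶ X, f = g) → IsZero X

/-- A well generated category: there is a regular cardinal `α` and a (small) set `S`
of `α`-small perfect generators. -/
def WellGeneratedCat (T : Type u₁) [Category.{v₁} T] : Prop :=
  HasCoproducts.{0} T ∧
  ∃ α : Cardinal.{0}, α.IsRegular ∧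
  ∃ S : Set T, Small.{0} S ∧
    (∀ X : T, (∀ s ∈ S, ∀ f g : (s : T) ⟶ X, f = g) → IsZero X) ∧
    (∀ s ∈ S, ∀ (J : Type) (g : J → T) (c : Cofan g), IsColimit c →
      ∀ f : (s : T) ⟶ c.pt, ∃ t : Set J, Cardinal.mk t < α ∧
        ∀ (c' : Cofan fun j : t => g j) (hc' : IsColimit c'),
          ∃ f' : (s : T) ⟶ c'.pt, f = f' ≫ hc'.desc (Cofan.mk c.pt fun j => c.inj j)) ∧
    (∀ (J : Type) (X Y : J → T) (φ : ∀ j, X j ⟶ Y j)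
        (cX : Cofan X) (hX : IsColimit cX) (cY : Cofan Y), IsColimit cY →
      (∀ s ∈ S, ∀ (j : J) (g : (s : T) ⟶ Y j), ∃ h : (s : T) ⟶ X j, h ≫ φ j = g) →
      ∀ s ∈ S, ∀ g : (s : T) ⟶ cY.pt,
        ∃ h : (s : T) ⟶ cX.pt, h ≫ hX.desc (Cofan.mk cY.pt fun j => φ j ≫ cY.inj j) = g)

end Recollement

section Stmt3

variable {R}

/-- A transfinite tower of degreewise pure monomorphisms with stages and successor
quotients in the class `P`, and colimit `X`. -/
structure TransfinitePureTower (P : Set (Cx R)) (X : Cx R) where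
  J : Type
  [linOrd : LinearOrder J]
  [wellOrd : WellFoundedLT J]
  [orderBot : OrderBot J]
  F : J ⥤ Cx R
  stage_mem : ∀ j : J, F.obj j ∈ P
  succ_mono : ∀ (j k : J) (h : j ⋖ k), DWPureMonoCx (F.map (homOfLE h.le))
  succ_quot : ∀ (j k : J) (h : j ⋖ k), ∃ (Q : Cx R) (p : F.obj k ⟶ Q),
    DWPureSES (F.map (homOfLE h.le)) p ∧ Q ∈ P
  continuous : ∀ j : J, Order.IsSuccLimit j → Nonempty (IsColimit (iioCocone F j))
  ι : F ⟶ (Functor.const J).obj X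
  isColimit : IsColimit (Cocone.mk X ι)

end Stmt3

section TransfiniteProof

variable {R}

section MtBasics

variable {M : Type} [AddCommGroup M] [Module Rᵐᵒᵖ M]
variable {N : Type} [AddCommGroup N] [Module R N]

/-- The canonical map to the quotient defining `mt`. -/
def mtMk (z : TensorProduct ℤ M N) : mt R M N := QuotientAddGroup.mk z

lemma mtMk_zero : (mtMk (R := R) (0 : TensorProduct ℤ M N)) = 0 := rfl

lemma mtMk_add (a b : TensorProduct ℤ M N) : mtMk (R := R) (a + b) = mtMk a + mtMk b := rfl

lemma mtMk_surjective :
    Function.Surjective (mtMk : TensorProduct ℤ M N → mt R M N) :=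
  QuotientAddGroup.mk_surjective

variable {M' : Type} [AddCommGroup M'] [Module Rᵐᵒᵖ M']
variable {N' : Type} [AddCommGroup N'] [Module R N']
variable {M'' : Type} [AddCommGroup M''] [Module Rᵐᵒᵖ M'']
variable {N'' : Type} [AddCommGroup N''] [Module R N'']

lemma mtMap_tmul (f : M →ₗ[Rᵐᵒᵖ] M') (g : N →ₗ[R] N') (m : M) (n : N) :
    mtMap f g (mtMk (m ⊗ₜ[ℤ] n)) = mtMk (f m ⊗ₜ[ℤ] g n) := rfl

lemma mt_hom_ext {A : Type*} [AddCommGroup A] {φ ψ : mt R M N →+ A}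
    (h : ∀ m n, φ (mtMk (m ⊗ₜ[ℤ] n)) = ψ (mtMk (m ⊗ₜ[ℤ] n))) : φ = ψ := by
  ext x
  obtain ⟨z, rfl⟩ := mtMk_surjective x
  induction z using TensorProduct.induction_on with
  | zero => rw [mtMk_zero, map_zero, map_zero]
  | tmul m n => exact h m n
  | add a b ha hb => rw [mtMk_add, map_add, map_add, ha, hb]

lemma mtMap_mtMap (f : M →ₗ[Rᵐᵒᵖ] M') (f' : M' →ₗ[Rᵐᵒᵖ] M'') (g : N →ₗ[R] N')
    (g' : N' →ₗ[R] N'') (x : mt R M N) :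
    mtMap f' g' (mtMap f g x) = mtMap (f'.comp f) (g'.comp g) x := by
  refine DFunLike.congr_fun
    (mt_hom_ext (φ := (mtMap f' g').comp (mtMap f g)) (ψ := mtMap (f'.comp f) (g'.comp g))
      (fun m n => ?_)) x
  simp only [AddMonoidHom.comp_apply, mtMap_tmul]
  rfl

lemma mtMap_congr {f f' : M →ₗ[Rᵐᵒᵖ] M'} {g g' : N →ₗ[R] N'} (hf : f = f') (hg : g = g')
    (x : mt R M N) : mtMap f g x = mtMap f' g' x := by rw [hf, hg]

lemma mtMap_id (x : mt R M N) :
    mtMap (LinearMap.id (R := Rᵐᵒᵖ) (M := M)) (LinearMap.id (R := R) (M := N)) x = x := by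
  refine DFunLike.congr_fun
    (mt_hom_ext (φ := mtMap LinearMap.id LinearMap.id) (ψ := AddMonoidHom.id _)
      (fun m n => ?_)) x
  simp [mtMap_tmul]

lemma mtMk_rel (r : R) (m : M) (n : N) :
    mtMk (R := R) ((MulOpposite.op r • m) ⊗ₜ[ℤ] n) = mtMk (m ⊗ₜ[ℤ] (r • n)) := by
  refine (QuotientAddGroup.eq_iff_sub_mem).mpr ?_
  exact AddSubgroup.subset_closure ⟨r, m, n, rfl⟩

end MtBasics

section HomGrp

variable (M : Type) [AddCommGroup M] [Module Rᵐᵒᵖ M] (A : Type) [AddCommGroup A]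

/-- `Hom_ℤ(M, A)` as a left `R`-module, for `M` a right `R`-module. -/
def HomGrp : Type := M →+ A

instance : AddCommGroup (HomGrp M A) := inferInstanceAs (AddCommGroup (M →+ A))

instance : FunLike (HomGrp M A) M A := inferInstanceAs (FunLike (M →+ A) M A)

instance : AddMonoidHomClass (HomGrp M A) M A :=
  inferInstanceAs (AddMonoidHomClass (M →+ A) M A)

variable {M A}

theorem homGrpExt {φ ψ : HomGrp M A} (h : ∀ m, φ m = ψ m) : φ = ψ := AddMonoidHom.ext h

variable (M A)

instance : Module R (HomGrp M A) where
  smul r φ := (φ : M →+ A).comp (DistribMulAction.toAddMonoidHom M (MulOpposite.op r))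
  one_smul φ := homGrpExt fun m => by
    show φ ((MulOpposite.op (1 : R)) • m) = φ m
    simp
  mul_smul r s φ := homGrpExt fun m => by
    show φ ((MulOpposite.op (r * s)) • m) = φ (MulOpposite.op s • MulOpposite.op r • m)
    rw [MulOpposite.op_mul, mul_smul]
  smul_zero r := rfl
  smul_add r φ ψ := rfl
  add_smul r s φ := homGrpExt fun m => by
    show φ ((MulOpposite.op (r + s)) • m)
      = φ (MulOpposite.op r • m) + φ (MulOpposite.op s • m)
    rw [MulOpposite.op_add, add_smul, map_add]
  zero_smul φ := homGrpExt fun m => by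
    show φ ((MulOpposite.op (0 : R)) • m) = 0
    simp

variable {M A}

lemma homGrp_smul_apply (r : R) (φ : HomGrp M A) (m : M) :
    (r • φ) m = φ (MulOpposite.op r • m) := rfl

variable {N : Type} [AddCommGroup N] [Module R N]

/-- Transpose a map `mt R M N →+ A` to an `R`-linear map `N →ₗ[R] Hom(M,A)`. -/
def mtToHom (ψ : mt R M N →+ A) : N →ₗ[R] HomGrp M A where
  toFun n :=
    { toFun := fun m => ψ (mtMk (m ⊗ₜ[ℤ] n))
      map_zero' := by
        show ψ (mtMk ((0 : M) ⊗ₜ[ℤ] n)) = 0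
        rw [show ((0 : M) ⊗ₜ[ℤ] n) = 0 from TensorProduct.zero_tmul _ n, mtMk_zero, map_zero]
      map_add' := fun m₁ m₂ => by
        show ψ (mtMk ((m₁ + m₂) ⊗ₜ[ℤ] n)) = ψ (mtMk (m₁ ⊗ₜ[ℤ] n)) + ψ (mtMk (m₂ ⊗ₜ[ℤ] n))
        rw [show ((m₁ + m₂) ⊗ₜ[ℤ] n) = m₁ ⊗ₜ[ℤ] n + m₂ ⊗ₜ[ℤ] n from
          TensorProduct.add_tmul _ _ _, mtMk_add, map_add] }
  map_add' n₁ n₂ := homGrpExt fun m => by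
    show ψ (mtMk (m ⊗ₜ[ℤ] (n₁ + n₂))) = ψ (mtMk (m ⊗ₜ[ℤ] n₁)) + ψ (mtMk (m ⊗ₜ[ℤ] n₂))
    rw [show (m ⊗ₜ[ℤ] (n₁ + n₂)) = m ⊗ₜ[ℤ] n₁ + m ⊗ₜ[ℤ] n₂ from TensorProduct.tmul_add _ _ _,
      mtMk_add, map_add]
  map_smul' r n := homGrpExt fun m => by
    show ψ (mtMk (m ⊗ₜ[ℤ] (r • n))) = ψ (mtMk ((MulOpposite.op r • m) ⊗ₜ[ℤ] n))
    rw [mtMk_rel]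

lemma mtToHom_apply (ψ : mt R M N →+ A) (n : N) (m : M) :
    mtToHom ψ n m = ψ (mtMk (m ⊗ₜ[ℤ] n)) := rfl

/-- Untranspose an `R`-linear map `N →ₗ[R] Hom(M,A)` to a map `mt R M N →+ A`. -/
def mtOfHom (τ : N →ₗ[R] HomGrp M A) : mt R M N →+ A := by
  refine QuotientAddGroup.lift _
    (TensorProduct.lift
      ({ toFun := fun m =>
          ({ toFun := fun n => τ n m
             map_add' := fun n₁ n₂ => by
              show τ (n₁ + n₂) m = τ n₁ m + τ n₂ m
              rw [map_add]; rfl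
             map_smul' := fun z n => by
              show τ (z • n) m = z • (τ n m)
              rw [map_zsmul]; rfl } : N →ₗ[ℤ] A)
         map_add' := fun m₁ m₂ => LinearMap.ext fun n => map_add (τ n) m₁ m₂
         map_smul' := fun z m => LinearMap.ext fun n => map_zsmul (τ n) z m } : M →ₗ[ℤ] N →ₗ[ℤ] A)).toAddMonoidHom ?_
  rw [mtRel, AddSubgroup.closure_le]
  rintro z ⟨r, m, n, rfl⟩
  simp only [SetLike.mem_coe, AddMonoidHom.mem_ker, map_sub, LinearMap.toAddMonoidHom_coe,
    TensorProduct.lift.tmul]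
  show τ n (MulOpposite.op r • m) - τ (r • n) m = 0
  rw [show τ (r • n) = r • τ n from map_smul τ r n]
  show τ n (MulOpposite.op r • m) - (r • τ n) m = 0
  rw [homGrp_smul_apply, sub_self]

lemma mtOfHom_mk (τ : N →ₗ[R] HomGrp M A) (m : M) (n : N) :
    mtOfHom τ (mtMk (m ⊗ₜ[ℤ] n)) = τ n m := rfl

end HomGrp

section MtColimit

variable {J : Type} [LinearOrder J] [Nonempty J]
variable (M : Type) [AddCommGroup M] [Module Rᵐᵒᵖ M]
variable (Nf : J ⥤ ModuleCat.{0} R)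

/-- The functor `j ↦ M ⊗_R Nf(j)` with values in abelian groups. -/
def mtF : J ⥤ AddCommGrpCat.{0} where
  obj j := AddCommGrpCat.of (mt R M (Nf.obj j))
  map {j k} f := AddCommGrpCat.ofHom (mtMap LinearMap.id (Nf.map f).hom)
  map_id j := by
    ext x
    show mtMap LinearMap.id (Nf.map (𝟙 j)).hom x = x
    rw [Nf.map_id]
    exact mtMap_id x
  map_comp {j k l} f g := by
    ext x
    show mtMap LinearMap.id (Nf.map (f ≫ g)).hom x
      = mtMap LinearMap.id (Nf.map g).hom (mtMap LinearMap.id (Nf.map f).hom x)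
    rw [mtMap_mtMap, Nf.map_comp]
    exact mtMap_congr (by ext; rfl) rfl x

variable {Nf}

/-- The cocone `M ⊗_R Nf(j) → M ⊗_R c.pt` induced by a cocone `c` on `Nf`. -/
def mtCocone (c : Cocone Nf) : Cocone (mtF M Nf) where
  pt := AddCommGrpCat.of (mt R M c.pt)
  ι :=
    { app := fun j => AddCommGrpCat.ofHom (mtMap LinearMap.id (c.ι.app j).hom)
      naturality := fun j k f => by
        ext x
        show mtMap LinearMap.id (c.ι.app k).hom (mtMap LinearMap.id (Nf.map f).hom x)
          = mtMap LinearMap.id (c.ι.app j).hom x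
        refine (mtMap_mtMap _ _ _ _ x).trans ?_
        exact mtMap_congr (by ext; rfl) (by rw [← c.w f]; rfl) x }

/-- Transpose a cocone on `mtF` to a cocone on `Nf` with values in `Hom(M, s.pt)`. -/
def homCocone (s : Cocone (mtF M Nf)) : Cocone Nf where
  pt := ModuleCat.of R (HomGrp M s.pt)
  ι :=
    { app := fun j => ModuleCat.ofHom (mtToHom (s.ι.app j).hom)
      naturality := fun j k f => by
        refine ModuleCat.hom_ext (LinearMap.ext fun n => homGrpExt fun m => ?_)
        have h := ConcreteCategory.congr_hom (s.w f) (mtMk (m ⊗ₜ[ℤ] n))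
        show mtToHom (s.ι.app k).hom (Nf.map f n) m = mtToHom (s.ι.app j).hom n m
        exact h }

/-- If `c` is a colimit cocone then so is the induced cocone on `M ⊗_R -`. -/
def mtIsColimit {c : Cocone Nf} (hc : IsColimit c) : IsColimit (mtCocone M c) := by
  refine IsColimit.mk (fun s => AddCommGrpCat.ofHom (mtOfHom (hc.desc (homCocone M s)).hom)) ?_ ?_
  · intro s j
    ext x
    obtain ⟨z, rfl⟩ := mtMk_surjective x
    induction z using TensorProduct.induction_on with
    | zero => exact (map_zero _).trans (map_zero _).symm
    | add a b ha hb =>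
        exact (map_add _ _ _).trans ((congrArg₂ (· + ·) ha hb).trans (map_add _ _ _).symm)
    | tmul m n =>
        show mtOfHom (hc.desc (homCocone M s)).hom (mtMap LinearMap.id (c.ι.app j).hom (mtMk (m ⊗ₜ[ℤ] n)))
          = s.ι.app j (mtMk (m ⊗ₜ[ℤ] n))
        have h : (c.ι.app j ≫ hc.desc (homCocone M s)) n = mtToHom (s.ι.app j).hom n :=
          ConcreteCategory.congr_hom (hc.fac (homCocone M s) j) n
        exact congrArg (fun ρ : HomGrp M s.pt => ρ m) h
  · intro s φ hφ
    ext x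
    obtain ⟨z, rfl⟩ := mtMk_surjective x
    induction z using TensorProduct.induction_on with
    | zero => exact (map_zero _).trans (map_zero _).symm
    | add a b ha hb => exact (map_add _ _ _).trans ((congrArg₂ (· + ·) ha hb).trans (map_add _ _ _).symm)
    | tmul m w =>
        obtain ⟨j, n, hn⟩ := Concrete.isColimit_exists_rep Nf hc w
        have hn' : (c.ι.app j).hom n = w := hn
        have key : (mtMk (m ⊗ₜ[ℤ] w) : mt R M c.pt)
            = mtMap LinearMap.id (c.ι.app j).hom (mtMk (m ⊗ₜ[ℤ] n)) := by
          rw [mtMap_tmul, hn']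
          rfl
        rw [key]
        have h1 := ConcreteCategory.congr_hom (hφ j) (mtMk (m ⊗ₜ[ℤ] n))
        have h2 : mtOfHom (hc.desc (homCocone M s)).hom
            (mtMap LinearMap.id (c.ι.app j).hom (mtMk (m ⊗ₜ[ℤ] n)))
            = s.ι.app j (mtMk (m ⊗ₜ[ℤ] n)) := by
          have h : (c.ι.app j ≫ hc.desc (homCocone M s)) n = mtToHom (s.ι.app j).hom n :=
            ConcreteCategory.congr_hom (hc.fac (homCocone M s) j) n
          exact congrArg (fun ρ : HomGrp M s.pt => ρ m) h
        exact h1.trans h2.symm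

variable (Nf)

lemma mt_exists_rep {c : Cocone Nf} (hc : IsColimit c) (x : mt R M c.pt) :
    ∃ (j : J) (y : mt R M (Nf.obj j)), mtMap LinearMap.id (c.ι.app j).hom y = x :=
  by
  obtain ⟨j, y, h⟩ := Concrete.isColimit_exists_rep (mtF M Nf) (mtIsColimit M hc)
    (x : (mtCocone M c).pt)
  exact ⟨j, y, h⟩

lemma mt_eventually_zero {c : Cocone Nf} (hc : IsColimit c) {j : J} (y : mt R M (Nf.obj j))
    (h : mtMap LinearMap.id (c.ι.app j).hom y = 0) :
    ∃ (k : J) (f : j ⟶ k), mtMap LinearMap.id (Nf.map f).hom y = 0 := by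
  have h0 : (mtCocone M c).ι.app j y = (mtCocone M c).ι.app j (0 : mt R M (Nf.obj j)) := by
    show mtMap LinearMap.id (c.ι.app j).hom y = mtMap LinearMap.id (c.ι.app j).hom 0
    rw [h, map_zero]
  obtain ⟨k, f, g, hk⟩ := Concrete.isColimit_exists_of_rep_eq (mtF M Nf)
    (mtIsColimit M hc) y 0 h0
  refine ⟨k, f, ?_⟩
  have : (mtF M Nf).map g (0 : mt R M (Nf.obj j)) = 0 := map_zero _
  exact hk.trans this

end MtColimit

end TransfiniteProof


section TdLevel

variable {R}

lemma mtMap_cx_comp {C : CxOp R} {W W' W'' : Cx R} (φ : W ⟶ W') (ψ : W' ⟶ W'') (d : ℤ)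
    {i : ℤ} (u : mt R (C.X i) (W.X d)) :
    mtMap LinearMap.id ((φ ≫ ψ).f d).hom u
      = mtMap LinearMap.id (ψ.f d).hom (mtMap LinearMap.id (φ.f d).hom u) := by
  rw [mtMap_mtMap]
  exact mtMap_congr (by ext x; rfl) (by ext x; rfl) u

lemma tmapR_of (C : CxOp R) {W W' : Cx R} (φ : W ⟶ W') (n i : ℤ)
    (y : mt R (C.X i) (W.X (n - i))) :
    tmapR C φ n (DirectSum.of (fun i => mt R (C.X i) (W.X (n - i))) i y)
      = DirectSum.of (fun i => mt R (C.X i) (W'.X (n - i))) i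
          (mtMap LinearMap.id (φ.f (n - i)).hom y) := by
  unfold tmapR
  rw [DirectSum.toAddMonoid_of]
  rfl

lemma tmapR_component (C : CxOp R) {W W' : Cx R} (φ : W ⟶ W') (n : ℤ) (x : tobj C W n)
    (i : ℤ) :
    (tmapR C φ n x) i = mtMap LinearMap.id (φ.f (n - i)).hom (x i) := by
  induction x using DirectSum.induction_on with
  | zero => simp
  | of i' y =>
      rw [tmapR_of]
      by_cases h : i' = i
      · subst h
        rw [DirectSum.of_eq_same, DirectSum.of_eq_same]
      · rw [DirectSum.of_eq_of_ne _ _ _ (Ne.symm h), DirectSum.of_eq_of_ne _ _ _ (Ne.symm h), map_zero]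
  | add a b ha hb =>
      rw [map_add, DirectSum.add_apply, DirectSum.add_apply, map_add, ha, hb]

lemma tmapR_tmapR (C : CxOp R) {W W' W'' : Cx R} (φ : W ⟶ W') (ψ : W' ⟶ W'') (n : ℤ)
    (x : tobj C W n) :
    tmapR C ψ n (tmapR C φ n x) = tmapR C (φ ≫ ψ) n x := by
  refine DFunLike.ext' (funext fun i => ?_)
  rw [tmapR_component, tmapR_component, tmapR_component, mtMap_mtMap]
  exact mtMap_congr (by ext x; rfl) (by ext x; rfl) (x i)

lemma td_of (C : CxOp R) (W : Cx R) (n i : ℤ) (y : mt R (C.X i) (W.X (n - i))) :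
    td C W n (DirectSum.of (fun i => mt R (C.X i) (W.X (n - i))) i y)
      = DirectSum.of (fun j => mt R (C.X j) (W.X (n + 1 - j))) (i + 1)
          (mtMap (C.d i (i + 1)).hom
            ((W.XIsoOfEq (show n - i = n + 1 - (i + 1) by ring)).hom.hom) y)
        + (((-1 : ℤˣ) ^ i : ℤˣ) : ℤ) •
            DirectSum.of (fun j => mt R (C.X j) (W.X (n + 1 - j))) i
              (mtMap LinearMap.id
                (((W.XIsoOfEq (show n - i + 1 = n + 1 - i by ring)).hom.hom :
                    W.X (n - i + 1) →ₗ[R] W.X (n + 1 - i)) ∘ₗ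
                  ((W.d (n - i) (n - i + 1)).hom : W.X (n - i) →ₗ[R] W.X (n - i + 1))) y) := by
  unfold td
  rw [DirectSum.toAddMonoid_of]
  rfl

lemma xIso_natural_apply {W W' : Cx R} (φ : W ⟶ W') {p q : ℤ} (h : p = q) (y : W.X p) :
    φ.f q ((W.XIsoOfEq h).hom y) = (W'.XIsoOfEq h).hom (φ.f p y) := by
  subst h
  simp [HomologicalComplex.XIsoOfEq]

lemma d_natural_apply {W W' : Cx R} (φ : W ⟶ W') (p p' : ℤ) (w : W.X p) :
    W'.d p p' (φ.f p w) = φ.f p' (W.d p p' w) :=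
  ConcreteCategory.congr_hom (φ.comm p p') w

lemma td_natural (C : CxOp R) {W W' : Cx R} (φ : W ⟶ W') (n : ℤ) (x : tobj C W n) :
    tmapR C φ (n + 1) (td C W n x) = td C W' n (tmapR C φ n x) := by
  induction x using DirectSum.induction_on with
  | zero => simp only [map_zero]
  | add a b ha hb => simp only [map_add, ha, hb]
  | of i y =>
      rw [tmapR_of, td_of, td_of, map_add, map_zsmul, tmapR_of, tmapR_of]
      congr 1
      · refine congrArg _ ?_
        rw [mtMap_mtMap, mtMap_mtMap]
        refine mtMap_congr (by ext x; rfl) ?_ y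
        ext w
        exact xIso_natural_apply φ _ _
      · refine congrArg _ (congrArg _ ?_)
        rw [mtMap_mtMap, mtMap_mtMap]
        refine mtMap_congr (by ext x; rfl) ?_ y
        ext w
        show φ.f (n + 1 - i) ((W.XIsoOfEq _).hom (W.d (n - i) (n - i + 1) w))
          = (W'.XIsoOfEq _).hom (W'.d (n - i) (n - i + 1) (φ.f (n - i) w))
        rw [xIso_natural_apply φ _ (W.d (n - i) (n - i + 1) w)]
        refine congrArg _ ?_
        exact (d_natural_apply φ _ _ w).symm

end TdLevel

section TobjColimit

variable {R}
variable {J : Type} [LinearOrder J] [Nonempty J]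
variable (C : CxOp R) (F : J ⥤ Cx R) {X : Cx R} (κ : F ⟶ (Functor.const J).obj X)

/-- The cocone on `F ⋙ eval d` induced by a cocone on `F`. -/
def evalCocone (d : ℤ) :
    Cocone (F ⋙ HomologicalComplex.eval (ModuleCat.{0} R) (ComplexShape.up ℤ) d) :=
  (HomologicalComplex.eval (ModuleCat.{0} R) (ComplexShape.up ℤ) d).mapCocone (Cocone.mk X κ)

/-- Evaluation preserves the colimit. -/
noncomputable def evalIsColimit (d : ℤ) (hX : IsColimit (Cocone.mk X κ)) :
    IsColimit (evalCocone F κ d) :=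
  isColimitOfPreserves _ hX

lemma tobj_exists_rep (hX : IsColimit (Cocone.mk X κ)) (n : ℤ) (x : tobj C X n) :
    ∃ (j : J) (y : tobj C (F.obj j) n), tmapR C (κ.app j) n y = x := by
  induction x using DirectSum.induction_on with
  | zero => exact ⟨Classical.arbitrary J, 0, map_zero _⟩
  | of i z =>
      obtain ⟨j, y, hy⟩ := mt_exists_rep (C.X i)
        (F ⋙ HomologicalComplex.eval (ModuleCat.{0} R) (ComplexShape.up ℤ) (n - i))
        (evalIsColimit F κ (n - i) hX) z
      exact ⟨j, DirectSum.of _ i y, (tmapR_of C (κ.app j) n i y).trans (congrArg _ hy)⟩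
  | add a b ha hb =>
      obtain ⟨j, y, rfl⟩ := ha
      obtain ⟨k, z, rfl⟩ := hb
      refine ⟨max j k, tmapR C (F.map (homOfLE (le_max_left j k))) n y
        + tmapR C (F.map (homOfLE (le_max_right j k))) n z, ?_⟩
      have hw1 : F.map (homOfLE (le_max_left j k)) ≫ κ.app (max j k) = κ.app j := by
        simpa using κ.naturality (homOfLE (le_max_left j k))
      have hw2 : F.map (homOfLE (le_max_right j k)) ≫ κ.app (max j k) = κ.app k := by
        simpa using κ.naturality (homOfLE (le_max_right j k))
      rw [map_add, tmapR_tmapR, tmapR_tmapR, hw1, hw2]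

lemma tobj_eventually_zero (hX : IsColimit (Cocone.mk X κ)) (n : ℤ) (j : J)
    (y : tobj C (F.obj j) n)
    (h : tmapR C (κ.app j) n y = 0) :
    ∃ (k : J) (f : j ⟶ k), tmapR C (F.map f) n y = 0 := by
  classical
  have key : ∀ s : Finset ℤ, ∃ (k : J) (f : j ⟶ k),
      ∀ i ∈ s, mtMap LinearMap.id ((F.map f).f (n - i)).hom (y i) = 0 := by
    intro s
    induction s using Finset.induction_on with
    | empty => exact ⟨j, 𝟙 j, by simp⟩
    | @insert i s hi ih =>
        obtain ⟨k, f, hf⟩ := ih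
        have hcomp : mtMap LinearMap.id ((κ.app j).f (n - i)).hom (y i) = 0 := by
          have h2 : (tmapR C (κ.app j) n y) i = 0 := by rw [h]; rfl
          rwa [tmapR_component] at h2
        obtain ⟨k', f', hk'0⟩ := mt_eventually_zero (C.X i)
          (F ⋙ HomologicalComplex.eval (ModuleCat.{0} R) (ComplexShape.up ℤ) (n - i))
          (evalIsColimit F κ (n - i) hX) (y i) hcomp
        have hk' : mtMap LinearMap.id ((F.map f').f (n - i)).hom (y i) = 0 := hk'0
        have hjl : j ≤ max k k' := le_trans (leOfHom f) (le_max_left k k')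
        refine ⟨max k k', homOfLE hjl, ?_⟩
        intro i'' hmem
        rcases Finset.mem_insert.mp hmem with rfl | hs
        · have heq : (homOfLE hjl : j ⟶ max k k')
              = f' ≫ homOfLE (le_max_right k k') := Subsingleton.elim _ _
          rw [heq, F.map_comp, mtMap_cx_comp, hk', map_zero]
        · have heq : (homOfLE hjl : j ⟶ max k k')
              = f ≫ homOfLE (le_max_left k k') := Subsingleton.elim _ _
          rw [heq, F.map_comp, mtMap_cx_comp, hf i'' hs, map_zero]
  obtain ⟨k, f, hf⟩ := key (DFinsupp.support y)
  refine ⟨k, f, ?_⟩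
  refine DFunLike.ext' (funext fun i => ?_)
  rw [tmapR_component]
  by_cases hmem : i ∈ DFinsupp.support y
  · rw [hf i hmem]
    rfl
  · rw [DFinsupp.notMem_support_iff.mp hmem, map_zero]
    rfl

end TobjColimit


/-- Proposition 3.3(3): the class of `𝒞`-acyclic complexes is closed under transfinite
extensions in `Ch(R)_pur`: if `X` is the colimit of a continuous chain of degreewise
pure monomorphisms whose stages and successor quotients are all `𝒞`-acyclic, then `X`
is `𝒞`-acyclic. -/
theorem cAcyclic_transfinite_closure (𝒞 : Set (CxOp R)) (X : Cx R)
    (h : Nonempty (TransfinitePureTower {W : Cx R | CAcyclic 𝒞 W} X)) :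
    CAcyclic 𝒞 X := by
  obtain ⟨T⟩ := h
  letI : LinearOrder T.J := T.linOrd
  letI : OrderBot T.J := T.orderBot
  haveI : Nonempty T.J := ⟨⊥⟩
  intro C hC n y
  have hstage : ∀ (j : T.J) (m : ℤ),
      Function.Exact (td C (T.F.obj j) m) (td C (T.F.obj j) (m + 1)) :=
    fun j m => T.stage_mem j C hC m
  constructor
  · intro h0
    obtain ⟨j, y', rfl⟩ := tobj_exists_rep C T.F T.ι T.isColimit (n + 1) y
    have h1 : tmapR C (T.ι.app j) (n + 1 + 1) (td C (T.F.obj j) (n + 1) y') = 0 := by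
      rw [td_natural]
      exact h0
    obtain ⟨k, f, hk⟩ := tobj_eventually_zero C T.F T.ι T.isColimit (n + 1 + 1) j _ h1
    rw [td_natural] at hk
    obtain ⟨x', hx'⟩ := (hstage k n _).mp hk
    refine ⟨tmapR C (T.ι.app k) n x', ?_⟩
    have hw : T.F.map f ≫ T.ι.app k = T.ι.app j := by simpa using T.ι.naturality f
    have e1 : td C X n (tmapR C (T.ι.app k) n x')
        = tmapR C (T.ι.app k) (n + 1) (td C (T.F.obj k) n x') :=
      (td_natural C (T.ι.app k) n x').symm
    rw [e1, hx', tmapR_tmapR, hw]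
  · rintro ⟨x, rfl⟩
    obtain ⟨j, x', rfl⟩ := tobj_exists_rep C T.F T.ι T.isColimit n x
    have e1 : td C X n (tmapR C (T.ι.app j) n x')
        = tmapR C (T.ι.app j) (n + 1) (td C (T.F.obj j) n x') :=
      (td_natural C (T.ι.app j) n x').symm
    have e2 : td C X (n + 1) (tmapR C (T.ι.app j) (n + 1) (td C (T.F.obj j) n x'))
        = tmapR C (T.ι.app j) (n + 1 + 1) (td C (T.F.obj j) (n + 1) (td C (T.F.obj j) n x')) :=
      (td_natural C (T.ι.app j) (n + 1) _).symm
    rw [e1, e2, (hstage j n (td C (T.F.obj j) n x')).mpr ⟨x', rfl⟩, map_zero]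

end KFlatPaper
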